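/- The commutator subgroup of the group U_2 of unitriangular automorphisms of A_2 = K⟨x,y⟩ is [U_2, U_2] = { (x + f(y), y) : f(y) ∈ K⟨y⟩ }, i.e. it consists exactly of the automorphisms fixing y and sending x ↦ x + f(y) for some f in the subalgebra generated by y. -/

import Mathlib

/- STATEMENT 4: the commutator subgroup of the group U₂ of unitriangular
   automorphisms of A₂ = K⟨x,y⟩ consists exactly of the automorphisms fixing y
   and sending x ↦ x + f(y) for some f ∈ K⟨y⟩.  Here x = ι K 0, y = ι K 1. -/

noncomputable section
open FreeAlgebra

abbrev A2 (K : Type) [Field K] := FreeAlgebra K (Fin 2)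

private lemma adjoin_stable {K : Type} [Field K]
    (φ : A2 K ≃ₐ[K] A2 K) (b : K)
    (hy : φ (ι K 1) = ι K 1 + algebraMap K (A2 K) b) :
    ∀ u ∈ Algebra.adjoin K ({ι K 1} : Set (A2 K)),
      φ u ∈ Algebra.adjoin K ({ι K 1} : Set (A2 K)) := by
  intro u hu
  induction hu using Algebra.adjoin_induction with
  | mem v hv =>
      rcases hv with rfl
      rw [hy]
      exact add_mem (Algebra.self_mem_adjoin_singleton K _) (Subalgebra.algebraMap_mem _ _)
  | algebraMap r => rw [AlgEquiv.commutes]; exact Subalgebra.algebraMap_mem _ _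
  | add u v _ _ hu hv => rw [map_add]; exact add_mem hu hv
  | mul u v _ _ hu hv => rw [map_mul]; exact mul_mem hu hv

/-- The group `U₂` of unitriangular automorphisms of the free associative algebra
`A₂ = K⟨x,y⟩` (with `x = ι K 0`, `y = ι K 1`): automorphisms sending
`x ↦ x + f(y)`, `y ↦ y + b·1` with `f ∈ K⟨y⟩`, `b ∈ K`. -/
def U2 (K : Type) [Field K] : Subgroup (A2 K ≃ₐ[K] A2 K) where
  carrier := {φ | ∃ f ∈ Algebra.adjoin K ({ι K 1} : Set (A2 K)), ∃ b : K,
    φ (ι K 0) = ι K 0 + f ∧ φ (ι K 1) = ι K 1 + algebraMap K (A2 K) b}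
  one_mem' := ⟨0, Subalgebra.zero_mem _, 0, by simp, by simp⟩
  mul_mem' := by
    rintro φ ψ ⟨f, hf, b, hfx, hfy⟩ ⟨h, hh, c, hhx, hhy⟩
    refine ⟨f + φ h, add_mem hf (adjoin_stable φ b hfy h hh), b + c, ?_, ?_⟩
    · show φ (ψ (ι K 0)) = _
      rw [hhx, map_add, hfx, add_assoc]
    · show φ (ψ (ι K 1)) = _
      rw [hhy, map_add, hfy, AlgEquiv.commutes, map_add, add_assoc]
  inv_mem' := by
    rintro φ ⟨f, hf, b, hfx, hfy⟩
    have hsy : φ.symm (ι K 1) = ι K 1 + algebraMap K (A2 K) (-b) := by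
      have h1 := congrArg φ.symm hfy
      rw [AlgEquiv.symm_apply_apply, map_add, AlgEquiv.commutes] at h1
      rw [eq_sub_of_add_eq h1.symm, map_neg, sub_eq_add_neg]
    have hsx : φ.symm (ι K 0) = ι K 0 + (-(φ.symm f)) := by
      have h1 := congrArg φ.symm hfx
      rw [AlgEquiv.symm_apply_apply, map_add] at h1
      rw [eq_sub_of_add_eq h1.symm, sub_eq_add_neg]
    exact ⟨-(φ.symm f), neg_mem (adjoin_stable φ.symm (-b) hsy f hf), -b, hsx, hsy⟩


open Polynomial in
private lemma delta_surj {K : Type} [Field K] [CharZero K] (p : K[X]) :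
    ∃ q : K[X], q.comp (X + 1) - q = p := by
  generalize hn : p.natDegree = n
  induction n using Nat.strong_induction_on generalizing p with
  | _ n ih =>
    by_cases hp : p = 0
    · exact ⟨0, by simp [hp]⟩
    set a := p.leadingCoeff with ha
    set c : K := a / ((n : K) + 1) with hc
    have hn1 : ((n : K) + 1) ≠ 0 := by
      have : ((n + 1 : ℕ) : K) ≠ 0 := Nat.cast_ne_zero.2 (Nat.succ_ne_zero n)
      push_cast at this; exact this
    set q₀ : K[X] := C c * X ^ (n + 1) with hq₀
    have hΔ : q₀.comp (X + 1) - q₀ = C c * ((X + 1) ^ (n + 1) - X ^ (n + 1)) := by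
      rw [hq₀, mul_sub]
      simp [Polynomial.mul_comp, Polynomial.pow_comp]
    set r : K[X] := p - (q₀.comp (X + 1) - q₀) with hr
    have hcoeff : ∀ k, n ≤ k → r.coeff k = 0 := by
      intro k hk
      rcases eq_or_lt_of_le hk with heq | hk'
      · cases heq
        have h1 : (q₀.comp (X + 1) - q₀).coeff n = c * ((n + 1 : ℕ) : K) := by
          rw [hΔ, coeff_C_mul, coeff_sub, coeff_X_add_one_pow, coeff_X_pow,
            if_neg (by omega : ¬n = n + 1), Nat.choose_succ_self_right]
          push_cast; ring
        have h2 : p.coeff n = a := by rw [ha, leadingCoeff, hn]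
        rw [hr, coeff_sub, h1, h2, hc]
        push_cast
        rw [div_mul_cancel₀ _ hn1, sub_self]
      · have h1 : (q₀.comp (X + 1) - q₀).coeff k = 0 := by
          rw [hΔ, coeff_C_mul, coeff_sub, coeff_X_add_one_pow, coeff_X_pow]
          rcases eq_or_lt_of_le (Nat.succ_le_of_lt hk') with h | h
          · rw [← h]; simp
          · rw [Nat.choose_eq_zero_of_lt h, if_neg (by omega)]; simp
        have h2 : p.coeff k = 0 := coeff_eq_zero_of_natDegree_lt (hn ▸ hk')
        rw [hr, coeff_sub, h1, h2, sub_self]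
    by_cases hr0 : r = 0
    · refine ⟨q₀, ?_⟩
      rw [hr] at hr0
      exact (sub_eq_zero.mp hr0).symm
    · have hle : r.natDegree ≤ n :=
        natDegree_le_iff_coeff_eq_zero.2 (fun N hN => hcoeff N hN.le)
      have hne : r.natDegree ≠ n := fun h => (mt leadingCoeff_eq_zero.mp hr0)
        (by rw [leadingCoeff, h]; exact hcoeff n le_rfl)
      obtain ⟨q₁, hq₁⟩ := ih r.natDegree (lt_of_le_of_ne hle hne) r rfl
      refine ⟨q₀ + q₁, ?_⟩
      rw [add_comp]
      rw [hr] at hq₁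
      linear_combination hq₁

/-- The unitriangular endomorphism `x ↦ x + f`, `y ↦ y + b`. -/
private def E {K : Type} [Field K] (f : A2 K) (b : K) : A2 K →ₐ[K] A2 K :=
  FreeAlgebra.lift K ![ι K 0 + f, ι K 1 + algebraMap K (A2 K) b]

private lemma E_x {K : Type} [Field K] (f : A2 K) (b : K) :
    E f b (ι K 0) = ι K 0 + f := by
  simp [E, FreeAlgebra.lift_ι_apply]

private lemma E_y {K : Type} [Field K] (f : A2 K) (b : K) :
    E f b (ι K 1) = ι K 1 + algebraMap K (A2 K) b := by
  simp [E, FreeAlgebra.lift_ι_apply]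

private lemma hom_ext2 {K : Type} [Field K] {φ ψ : A2 K →ₐ[K] A2 K}
    (h0 : φ (ι K 0) = ψ (ι K 0)) (h1 : φ (ι K 1) = ψ (ι K 1)) : φ = ψ := by
  apply FreeAlgebra.hom_ext
  funext i
  fin_cases i <;> simpa

private lemma equiv_ext2 {K : Type} [Field K] {φ ψ : A2 K ≃ₐ[K] A2 K}
    (h0 : φ (ι K 0) = ψ (ι K 0)) (h1 : φ (ι K 1) = ψ (ι K 1)) : φ = ψ := by
  apply AlgEquiv.coe_algHom_injective
  exact hom_ext2 h0 h1

private lemma E_fix {K : Type} [Field K] (f : A2 K) {u : A2 K}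
    (hu : u ∈ Algebra.adjoin K ({ι K 1} : Set (A2 K))) : E f 0 u = u := by
  induction hu using Algebra.adjoin_induction with
  | mem v hv => rcases hv with rfl; simp [E_y]
  | algebraMap r => exact (E f 0).commutes r
  | add u v _ _ hu hv => rw [map_add, hu, hv]
  | mul u v _ _ hu hv => rw [map_mul, hu, hv]

private lemma E_comp {K : Type} [Field K] (f h : A2 K) (b c : K) :
    (E f b).comp (E h c) = E (f + E f b h) (b + c) := by
  apply hom_ext2 <;>
    simp [AlgHom.comp_apply, E_x, E_y, map_add, AlgEquiv.commutes, add_assoc,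
      (E f b).commutes]

/-- The automorphism `x ↦ x + g`, `y ↦ y` for `g ∈ K⟨y⟩`. -/
private def Sa {K : Type} [Field K] (g : A2 K)
    (hg : g ∈ Algebra.adjoin K ({ι K 1} : Set (A2 K))) : A2 K ≃ₐ[K] A2 K :=
  AlgEquiv.ofAlgHom (E g 0) (E (-g) 0)
    (by rw [E_comp, E_fix g (neg_mem hg), add_neg_cancel, add_zero]
        apply hom_ext2 <;> simp [E_x, E_y])
    (by rw [E_comp, E_fix (-g) hg, neg_add_cancel, add_zero]
        apply hom_ext2 <;> simp [E_x, E_y])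

private lemma Sa_apply {K : Type} [Field K] (g : A2 K)
    (hg : g ∈ Algebra.adjoin K ({ι K 1} : Set (A2 K))) (u : A2 K) :
    Sa g hg u = E g 0 u := rfl

private lemma Sa_symm_apply {K : Type} [Field K] (g : A2 K)
    (hg : g ∈ Algebra.adjoin K ({ι K 1} : Set (A2 K))) (u : A2 K) :
    (Sa g hg).symm u = E (-g) 0 u := rfl

/-- The automorphism `x ↦ x`, `y ↦ y + b`. -/
private def Tb {K : Type} [Field K] (b : K) : A2 K ≃ₐ[K] A2 K :=
  AlgEquiv.ofAlgHom (E 0 b) (E 0 (-b))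
    (by rw [E_comp, map_zero, add_zero, add_neg_cancel]
        apply hom_ext2 <;> simp [E_x, E_y])
    (by rw [E_comp, map_zero, add_zero, neg_add_cancel]
        apply hom_ext2 <;> simp [E_x, E_y])

private lemma Tb_apply {K : Type} [Field K] (b : K) (u : A2 K) :
    Tb b u = E 0 b u := rfl

private lemma Tb_symm_apply {K : Type} [Field K] (b : K) (u : A2 K) :
    (Tb b).symm u = E 0 (-b) u := rfl

/-- The counit `ε : A₂ → K` killing the generators. -/
private def eps (K : Type) [Field K] : A2 K →ₐ[K] K :=
  FreeAlgebra.lift K 0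

private lemma eps_y {K : Type} [Field K] : eps K (ι K 1) = 0 := by
  simp [eps, FreeAlgebra.lift_ι_apply]

/-- The "translation part" homomorphism `U₂ → K`. -/
private def beta (K : Type) [Field K] : U2 K →* Multiplicative K where
  toFun φ := Multiplicative.ofAdd (eps K ((φ : A2 K ≃ₐ[K] A2 K) (ι K 1)))
  map_one' := by
    simp [eps_y]
  map_mul' := by
    rintro ⟨φ, f, hf, b, hfx, hfy⟩ ⟨ψ, h, hh, c, hhx, hhy⟩
    have : (φ * ψ) (ι K 1) = ι K 1 + algebraMap K (A2 K) b + algebraMap K (A2 K) c := by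
      rw [AlgEquiv.mul_apply, hhy, map_add, hfy, AlgEquiv.commutes]
    show Multiplicative.ofAdd (eps K ((φ * ψ) (ι K 1))) = _
    rw [this]
    simp only [map_add, eps_y, AlgHom.commutes, Algebra.algebraMap_self, RingHom.id_apply]
    rw [hfy, hhy]
    simp only [map_add, eps_y, AlgHom.commutes, Algebra.algebraMap_self, RingHom.id_apply]
    rw [← ofAdd_add]
    ring_nf

open scoped commutatorElement

theorem commutator_subgroup_U2 (K : Type) [Field K] [CharZero K] (φ : U2 K) :
    φ ∈ commutator ↥(U2 K) ↔
      ∃ f ∈ Algebra.adjoin K ({ι K 1} : Set (A2 K)),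
        (φ : A2 K ≃ₐ[K] A2 K) (ι K 0) = ι K 0 + f ∧
        (φ : A2 K ≃ₐ[K] A2 K) (ι K 1) = ι K 1 := by
  constructor
  · intro hφ
    obtain ⟨f, hf, b, hfx, hfy⟩ := φ.2
    have h1 : beta K φ = 1 :=
      MonoidHom.mem_ker.mp (Abelianization.commutator_subset_ker (beta K) hφ)
    have h2 : eps K ((φ : A2 K ≃ₐ[K] A2 K) (ι K 1)) = 0 := by
      simpa [beta] using congrArg Multiplicative.toAdd h1
    rw [hfy] at h2
    rw [map_add, eps_y, zero_add] at h2
    have hb : b = 0 := by simpa using h2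
    refine ⟨f, hf, hfx, ?_⟩
    rw [hfy, hb, map_zero, add_zero]
  · rintro ⟨f, hf, hfx, hfy⟩
    rw [Algebra.adjoin_singleton_eq_range_aeval] at hf
    obtain ⟨p, hp⟩ := hf
    obtain ⟨q, hq⟩ := delta_surj p
    set g : A2 K := Polynomial.aeval (ι K 1) q with hgdef
    have hg : g ∈ Algebra.adjoin K ({ι K 1} : Set (A2 K)) := by
      rw [Algebra.adjoin_singleton_eq_range_aeval]
      exact ⟨q, rfl⟩
    have hT : Tb (1 : K) ∈ U2 K :=
      ⟨0, Subalgebra.zero_mem _, 1, by rw [Tb_apply, E_x], by rw [Tb_apply, E_y]⟩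
    have hS : Sa g hg ∈ U2 K :=
      ⟨g, hg, 0, by rw [Sa_apply, E_x], by rw [Sa_apply, E_y]⟩
    set T : U2 K := ⟨Tb 1, hT⟩ with hTdef
    set S : U2 K := ⟨Sa g hg, hS⟩ with hSdef
    have hcomm : ⁅T, S⁆ ∈ commutator ↥(U2 K) := by
      rw [commutator_def]
      exact Subgroup.commutator_mem_commutator (Subgroup.mem_top T) (Subgroup.mem_top S)
    have hg' : (Tb (1 : K)).symm g ∈ Algebra.adjoin K ({ι K 1} : Set (A2 K)) :=
      adjoin_stable (Tb 1).symm (-1) (by rw [Tb_symm_apply, E_y]) g hg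
    -- evaluate the commutator on the generator x
    have e1 : (Sa g hg).symm (ι K 0) = ι K 0 + -g := by
      rw [Sa_symm_apply, E_x]
    have e2 : (Tb (1 : K)).symm (ι K 0 + -g) = ι K 0 + -((Tb 1).symm g) := by
      rw [Tb_symm_apply, map_add, map_neg, E_x, add_zero, ← Tb_symm_apply]
    have e3 : (Sa g hg) (ι K 0 + -((Tb (1 : K)).symm g))
        = ι K 0 + g + -((Tb 1).symm g) := by
      rw [Sa_apply, map_add, map_neg, E_x,
        show E g 0 ((Tb (1 : K)).symm g) = (Tb 1).symm g from E_fix g hg']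
    have e4 : (Tb (1 : K)) (ι K 0 + g + -((Tb 1).symm g))
        = ι K 0 + (Tb 1 g - g) := by
      rw [map_add, map_add, map_neg, AlgEquiv.apply_symm_apply,
        Tb_apply (1 : K) (ι K 0), E_x, add_zero]
      abel
    have key0 : ((⁅T, S⁆ : U2 K) : A2 K ≃ₐ[K] A2 K) (ι K 0)
        = ι K 0 + (Tb 1 g - g) := by
      show (Tb (1 : K)) ((Sa g hg) ((Tb (1 : K)).symm ((Sa g hg).symm (ι K 0)))) = _
      rw [e1, e2, e3, e4]
    -- evaluate the commutator on the generator y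
    have f1 : (Sa g hg).symm (ι K 1) = ι K 1 := by
      rw [Sa_symm_apply, E_y, map_zero, add_zero]
    have f2 : (Tb (1 : K)).symm (ι K 1) = ι K 1 + algebraMap K (A2 K) (-1) := by
      rw [Tb_symm_apply, E_y]
    have f3 : (Sa g hg) (ι K 1 + algebraMap K (A2 K) (-1))
        = ι K 1 + algebraMap K (A2 K) (-1) := by
      rw [Sa_apply, map_add, E_y, map_zero, add_zero, AlgHom.commutes]
    have f4 : (Tb (1 : K)) (ι K 1 + algebraMap K (A2 K) (-1)) = ι K 1 := by
      rw [map_add, Tb_apply, E_y, AlgEquiv.commutes, add_assoc, ← map_add,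
        add_neg_cancel, map_zero, add_zero]
    have key1 : ((⁅T, S⁆ : U2 K) : A2 K ≃ₐ[K] A2 K) (ι K 1) = ι K 1 := by
      show (Tb (1 : K)) ((Sa g hg) ((Tb (1 : K)).symm ((Sa g hg).symm (ι K 1)))) = _
      rw [f1, f2, f3, f4]
    -- identify the x-part with f
    have hτ : Tb (1 : K) g = Polynomial.aeval (ι K 1) (q.comp (Polynomial.X + 1)) := by
      rw [Polynomial.aeval_comp]
      have hx1 : Polynomial.aeval (ι K 1) ((Polynomial.X : Polynomial K) + 1)
          = ι K 1 + algebraMap K (A2 K) 1 := by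
        simp [Algebra.algebraMap_eq_smul_one]
      rw [hx1, ← E_y 0 (1 : K), ← Tb_apply, hgdef]
      exact (Polynomial.aeval_algHom_apply (Tb (1 : K)) (ι K 1) q).symm
    have hfeq : Tb (1 : K) g - g = f := by
      rw [hτ, hgdef, ← map_sub, hq]
      exact hp
    have hEq : φ = ⁅T, S⁆ := by
      apply Subtype.ext
      apply equiv_ext2
      · rw [hfx, key0, hfeq]
      · rw [hfy, key1]
    rw [hEq]
    exact hcomm
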